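/- arXiv:1009.2712 — 3 statements merged into one kernel-verified Lean document; each statement's English description precedes it below -/
import Mathlib

section
/- On an almost Hermitian manifold, the inclusions of curvature identity classes hold: AH_1 ⊆ AH_2 ⊆ AH_3; that is, if a (0,4) curvature-type tensor R on a real inner product space with orthogonal almost complex structure J satisfies R(X,Y,Z,U)=R(X,Y,JZ,JU) for all vectors, then it satisfies R(X,Y,Z,U)=R(X,Y,JZ,JU)+R(X,JY,Z,JU)+R(JX,Y,Z,JU), and the latter identity implies R(X,Y,Z,U)=R(JX,JY,JZ,JU). -/
open scoped BigOperators InnerProductSpace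

variable {V : Type*} [NormedAddCommGroup V] [InnerProductSpace ℝ V]

/-- The tensor `π₁(x,y,z,u) = g(x,u)g(y,z) − g(x,z)g(y,u)`. -/
def pi1 (x y z u : V) : ℝ := ⟪x, u⟫_ℝ * ⟪y, z⟫_ℝ - ⟪x, z⟫_ℝ * ⟪y, u⟫_ℝ

/-- The tensor `ψ(Q)` associated to a bilinear form `Q` and an almost complex
structure `J`. -/
def psi (J : V →ₗ[ℝ] V) (Q : V → V → ℝ) (x y z u : V) : ℝ :=
  ⟪x, J u⟫_ℝ * Q y (J z) - ⟪x, J z⟫_ℝ * Q y (J u) - 2 * ⟪x, J y⟫_ℝ * Q z (J u)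
    + ⟪y, J z⟫_ℝ * Q x (J u) - ⟪y, J u⟫_ℝ * Q x (J z) - 2 * ⟪z, J u⟫_ℝ * Q x (J y)

/-- `π₂ = (1/2) ψ(g)`. -/
noncomputable def pi2 (J : V →ₗ[ℝ] V) (x y z u : V) : ℝ :=
  (1 / 2) * psi J (fun a b => ⟪a, b⟫_ℝ) x y z u

/-- An algebraic curvature tensor: multilinear (linearity in the first slot,
the others follow from the symmetries), antisymmetric in the first and the
last pairs, symmetric under exchange of the pairs, first Bianchi identity. -/
def IsACT (R : V → V → V → V → ℝ) : Prop :=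
  (∀ x x' y z u, R (x + x') y z u = R x y z u + R x' y z u) ∧
  (∀ (c : ℝ) x y z u, R (c • x) y z u = c * R x y z u) ∧
  (∀ x y z u, R x y z u = -R y x z u) ∧
  (∀ x y z u, R x y z u = -R x y u z) ∧
  (∀ x y z u, R x y z u = R z u x y) ∧
  (∀ x y z u, R x y z u + R y z x u + R z x y u = 0)

/-- Identity 1: `R(X,Y,Z,U) = R(X,Y,JZ,JU)`. -/
def Id1 (J : V →ₗ[ℝ] V) (R : V → V → V → V → ℝ) : Prop :=
  ∀ x y z u, R x y z u = R x y (J z) (J u)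

/-- Identity 2: `R(X,Y,Z,U) = R(X,Y,JZ,JU) + R(X,JY,Z,JU) + R(JX,Y,Z,JU)`. -/
def Id2 (J : V →ₗ[ℝ] V) (R : V → V → V → V → ℝ) : Prop :=
  ∀ x y z u, R x y z u = R x y (J z) (J u) + R x (J y) z (J u) + R (J x) y z (J u)

/-- Identity 3: `R(X,Y,Z,U) = R(JX,JY,JZ,JU)`. -/
def Id3 (J : V →ₗ[ℝ] V) (R : V → V → V → V → ℝ) : Prop :=
  ∀ x y z u, R x y z u = R (J x) (J y) (J z) (J u)

/-- For an algebraic curvature tensor `R` compatible with an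
orthogonal almost complex structure `J`, identity 1 implies identity 2, and
identity 2 implies identity 3 (so `AH₁ ⊆ AH₂ ⊆ AH₃`). -/
theorem stmt0 (J : V →ₗ[ℝ] V) (hJ2 : ∀ x, J (J x) = -x)
    (hJiso : ∀ x y, ⟪J x, J y⟫_ℝ = ⟪x, y⟫_ℝ)
    (R : V → V → V → V → ℝ) (hR : IsACT R) :
    (Id1 J R → Id2 J R) ∧ (Id2 J R → Id3 J R) := by
  obtain ⟨hadd, hsmul, ha1, ha2, hp, hb⟩ := hR
  have hneg1 : ∀ x y z u : V, R (-x) y z u = -R x y z u := by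
    intro x y z u
    rw [← neg_one_smul ℝ x, hsmul]; ring
  have hneg2 : ∀ x y z u : V, R x (-y) z u = -R x y z u := by
    intro x y z u
    rw [ha1 x (-y), hneg1, ha1 y x]; ring
  have hneg3 : ∀ x y z u : V, R x y (-z) u = -R x y z u := by
    intro x y z u
    rw [hp x y (-z) u, hneg1, hp z u x y]
  have hneg4 : ∀ x y z u : V, R x y z (-u) = -R x y z u := by
    intro x y z u
    rw [hp x y z (-u), hneg2, hp z u x y]
  constructor
  · intro h1 x y z u
    have key : R x (J y) z (J u) = -R (J x) y z (J u) := by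
      have e1 : R x (J y) z (J u) = R z (J u) x (J y) := hp _ _ _ _
      have e2 : R z (J u) x (J y) = R z (J u) (J x) (J (J y)) := h1 _ _ _ _
      rw [e1, e2, hJ2, hneg4, hp (J x) y z (J u)]
    rw [← h1 x y z u, key]; ring
  · intro h2 x y z u
    have I0 := h2 x y z u
    have I1 := h2 x y (J z) (J u)
    have I2 := h2 (J x) (J y) (J z) (J u)
    have I3 := h2 z u x y
    have I4 := h2 z u y x
    simp only [hJ2, hneg1, hneg2, hneg3, hneg4, neg_neg] at I1 I2
    have s1 := hp z u x y
    have s2 := hp z u (J x) (J y)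
    have s3 := hp z (J u) x (J y)
    have s4 := hp (J z) u x (J y)
    have s5 := hp z u y x
    have s6 := hp z (J u) y (J x)
    have s7 := hp (J z) u y (J x)
    have s8 := hp z u (J y) (J x)
    have a1 := ha1 y x z u
    have a2 := ha1 (J y) (J x) z u
    have a3 := ha1 y (J x) z (J u)
    have a4 := ha1 y (J x) (J z) u
    linarith [I0, I1, I2, I3, I4, s1, s2, s3, s4, s5, s6, s7, s8, a1, a2, a3, a4]
end

section
/- Identity 1 of AH_1 implies identity 2 of AH_2 for an algebraic curvature tensor compatible with an almost complex structure J. -/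
open scoped BigOperators InnerProductSpace

variable {V : Type*} [NormedAddCommGroup V] [InnerProductSpace ℝ V]

/-- Identity 1 implies identity 2 for an algebraic curvature
tensor compatible with an almost complex structure `J`. -/
theorem stmt1 (J : V →ₗ[ℝ] V) (hJ2 : ∀ x, J (J x) = -x)
    (hJiso : ∀ x y, ⟪J x, J y⟫_ℝ = ⟪x, y⟫_ℝ)
    (R : V → V → V → V → ℝ) (hR : IsACT R) (h1 : Id1 J R) : Id2 J R := by
  obtain ⟨hadd, hsmul, h12, h34, hpair, hb⟩ := hR
  have hneg : ∀ x y z u, R (-x) y z u = -R x y z u := by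
    intro x y z u
    rw [← neg_one_smul ℝ x, hsmul]; ring
  have hJJ : ∀ x y z u, R (J x) (J y) z u = R x y z u := by
    intro x y z u
    rw [hpair, ← h1, ← hpair]
  intro x y z u
  have e2 : R x (J y) z (J u) = - R (J x) y z (J u) := by
    have h := hJJ x (J y) z (J u)
    rw [hJ2] at h
    rw [← h, h12, hneg, ← h12]
  rw [← h1, e2]; ring
end

section
/- If an algebraic curvature tensor R on a 2m-dimensional space satisfies identity 3 and has constant antiholomorphic sectional curvature ν (i.e., R(x,y,y,x)=ν for every orthonormal pair x,y with g(x,Jy)=0 and y ⟂ Jx), then R = (1/6)ψ(S) + ν π₁ − ((2m−1)/3) ν π₂, where S is the Ricci form of R. -/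
open scoped BigOperators InnerProductSpace

variable {V : Type*} [NormedAddCommGroup V] [InnerProductSpace ℝ V]

namespace IsACT

variable {R : V → V → V → V → ℝ}

theorem add1 (h : IsACT R) : ∀ x x' y z u, R (x + x') y z u = R x y z u + R x' y z u := h.1
theorem smul1 (h : IsACT R) : ∀ (c : ℝ) x y z u, R (c • x) y z u = c * R x y z u := h.2.1
theorem swap12 (h : IsACT R) : ∀ x y z u, R x y z u = -R y x z u := h.2.2.1
theorem swap34 (h : IsACT R) : ∀ x y z u, R x y z u = -R x y u z := h.2.2.2.1
theorem pair (h : IsACT R) : ∀ x y z u, R x y z u = R z u x y := h.2.2.2.2.1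
theorem bianchi (h : IsACT R) : ∀ x y z u, R x y z u + R y z x u + R z x y u = 0 := h.2.2.2.2.2

theorem add2 (h : IsACT R) : ∀ x y y' z u, R x (y + y') z u = R x y z u + R x y' z u := by
  intro x y y' z u
  rw [h.swap12 x (y + y'), h.add1, h.swap12 y x, h.swap12 y' x]; ring

theorem smul2 (h : IsACT R) : ∀ (c : ℝ) x y z u, R x (c • y) z u = c * R x y z u := by
  intro c x y z u
  rw [h.swap12 x (c • y), h.smul1, h.swap12 y x]; ring

theorem add3 (h : IsACT R) : ∀ x y z z' u, R x y (z + z') u = R x y z u + R x y z' u := by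
  intro x y z z' u
  rw [h.pair x y (z + z'), h.add1, h.pair z, h.pair z']

theorem smul3 (h : IsACT R) : ∀ (c : ℝ) x y z u, R x y (c • z) u = c * R x y z u := by
  intro c x y z u
  rw [h.pair x y (c • z), h.smul1, h.pair z]

theorem add4 (h : IsACT R) : ∀ x y z u u', R x y z (u + u') = R x y z u + R x y z u' := by
  intro x y z u u'
  rw [h.swap34 x y z (u + u'), h.add3, h.swap34 x y u, h.swap34 x y u']; ring

theorem smul4 (h : IsACT R) : ∀ (c : ℝ) x y z u, R x y z (c • u) = c * R x y z u := by
  intro c x y z u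
  rw [h.swap34 x y z (c • u), h.smul3, h.swap34 x y u]; ring

theorem zero1 (h : IsACT R) : ∀ y z u, R 0 y z u = 0 := by
  intro y z u
  have := h.smul1 0 0 y z u
  simpa using this

theorem neg1 (h : IsACT R) : ∀ x y z u, R (-x) y z u = -R x y z u := by
  intro x y z u
  have := h.smul1 (-1) x y z u
  simpa using this

theorem neg2 (h : IsACT R) : ∀ x y z u, R x (-y) z u = -R x y z u := by
  intro x y z u
  have := h.smul2 (-1) x y z u
  simpa using this

theorem neg3 (h : IsACT R) : ∀ x y z u, R x y (-z) u = -R x y z u := by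
  intro x y z u
  have := h.smul3 (-1) x y z u
  simpa using this

theorem neg4 (h : IsACT R) : ∀ x y z u, R x y z (-u) = -R x y z u := by
  intro x y z u
  have := h.smul4 (-1) x y z u
  simpa using this

theorem zero2 (h : IsACT R) : ∀ x z u, R x 0 z u = 0 := by
  intro x z u
  have := h.smul2 0 x 0 z u
  simpa using this

theorem zero3 (h : IsACT R) : ∀ x y u, R x y 0 u = 0 := by
  intro x y u
  have := h.smul3 0 x y 0 u
  simpa using this

theorem zero4 (h : IsACT R) : ∀ x y z, R x y z 0 = 0 := by
  intro x y z
  have := h.smul4 0 x y z 0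
  simpa using this

theorem diag12 (h : IsACT R) : ∀ x z u, R x x z u = 0 := by
  intro x z u
  have := h.swap12 x x z u
  linarith

theorem diag34 (h : IsACT R) : ∀ x y z, R x y z z = 0 := by
  intro x y z
  have := h.swap34 x y z z
  linarith

/-- `R(x,p,q,x) = R(x,q,p,x)`. -/
theorem sect_symm (h : IsACT R) : ∀ x p q, R x p q x = R x q p x := by
  intro x p q
  rw [h.pair x p q x, h.swap12 q x, h.swap34 x q p x]

/-- `R(u,y,z,x) = R(x,z,y,u)`. -/
theorem cross (h : IsACT R) : ∀ x y z u, R u y z x = R x z y u := by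
  intro x y z u
  rw [h.pair u y z x, h.swap12 z x, h.swap34 x z u y]; ring

end IsACT

/-- An ACT all of whose "sectional values" vanish is zero. -/
theorem IsACT.zero_of_sect {R : V → V → V → V → ℝ} (h : IsACT R)
    (hs : ∀ x y, R x y y x = 0) : ∀ x y z u, R x y z u = 0 := by
  have h1 : ∀ x y z, R x y z x + R x z y x = 0 := by
    intro x y z
    have e := hs x (y + z)
    rw [h.add2, h.add3, h.add3] at e
    have := hs x y
    have := hs x z
    linarith
  have h2 : ∀ x y z u, R x y z u + R x z y u = 0 := by
    intro x y z u
    have e := h1 (x + u) y z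
    simp only [h.add1, h.add4] at e
    have e1 := h1 x y z
    have e2 := h1 u y z
    have c1 := h.cross x y z u
    have c2 := h.cross x z y u
    linarith
  intro x y z u
  have b := h.bianchi x y z u
  have a1 := h2 x y z u
  have a2 := h2 y z x u
  have a3 := h2 z x y u
  have s1 := h.swap12 y x z u
  have s2 := h.swap12 z y x u
  have s3 := h.swap12 x z y u
  linarith

theorem IsACT.constMul {R : V → V → V → V → ℝ} (h : IsACT R) (c : ℝ) :
    IsACT (fun x y z u => c * R x y z u) :=
  ⟨fun x x' y z u => by dsimp only; rw [h.add1]; ring,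
   fun c' x y z u => by dsimp only; rw [h.smul1]; ring,
   fun x y z u => by dsimp only; rw [h.swap12 x y z u]; ring,
   fun x y z u => by dsimp only; rw [h.swap34 x y z u]; ring,
   fun x y z u => by dsimp only; rw [h.pair x y z u],
   fun x y z u => by dsimp only; linear_combination c * h.bianchi x y z u⟩

theorem IsACT.sub {R1 R2 : V → V → V → V → ℝ} (h1 : IsACT R1) (h2 : IsACT R2) :
    IsACT (fun x y z u => R1 x y z u - R2 x y z u) :=
  ⟨fun x x' y z u => by dsimp only; rw [h1.add1, h2.add1]; ring,
   fun c' x y z u => by dsimp only; rw [h1.smul1, h2.smul1]; ring,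
   fun x y z u => by dsimp only; rw [h1.swap12 x y z u, h2.swap12 x y z u]; ring,
   fun x y z u => by dsimp only; rw [h1.swap34 x y z u, h2.swap34 x y z u]; ring,
   fun x y z u => by dsimp only; rw [h1.pair x y z u, h2.pair x y z u],
   fun x y z u => by
     dsimp only; linear_combination h1.bianchi x y z u - h2.bianchi x y z u⟩

theorem IsACT.add {R1 R2 : V → V → V → V → ℝ} (h1 : IsACT R1) (h2 : IsACT R2) :
    IsACT (fun x y z u => R1 x y z u + R2 x y z u) :=
  ⟨fun x x' y z u => by dsimp only; rw [h1.add1, h2.add1]; ring,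
   fun c' x y z u => by dsimp only; rw [h1.smul1, h2.smul1]; ring,
   fun x y z u => by dsimp only; rw [h1.swap12 x y z u, h2.swap12 x y z u]; ring,
   fun x y z u => by dsimp only; rw [h1.swap34 x y z u, h2.swap34 x y z u]; ring,
   fun x y z u => by dsimp only; rw [h1.pair x y z u, h2.pair x y z u],
   fun x y z u => by
     dsimp only; linear_combination h1.bianchi x y z u + h2.bianchi x y z u⟩

theorem isACT_pi1 : IsACT (pi1 : V → V → V → V → ℝ) := by
  refine ⟨?_, ?_, ?_, ?_, ?_, ?_⟩ <;> intro x y z u <;>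
    try intro u'
  all_goals simp only [pi1, inner_add_left, real_inner_smul_left]
  · ring
  · ring
  · ring
  · ring
  · linear_combination ⟪u, x⟫_ℝ * real_inner_comm z y
      + ⟪y, z⟫_ℝ * real_inner_comm u x + (-⟪u, y⟫_ℝ) * real_inner_comm z x
      + (-⟪x, z⟫_ℝ) * real_inner_comm u y
  · linear_combination ⟪x, u⟫_ℝ * real_inner_comm z y
      + (-⟪y, u⟫_ℝ) * real_inner_comm z x + ⟪z, u⟫_ℝ * real_inner_comm y x

theorem isACT_psi (J : V →ₗ[ℝ] V)
    (hg : ∀ a c : V, ⟪c, J a⟫_ℝ = -⟪a, J c⟫_ℝ)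
    (Q : V → V → ℝ)
    (hQa1 : ∀ a a' c, Q (a + a') c = Q a c + Q a' c)
    (hQs1 : ∀ (t : ℝ) a c, Q (t • a) c = t * Q a c)
    (hQhyb : ∀ a c, Q c (J a) = -Q a (J c)) : IsACT (psi J Q) := by
  refine ⟨?_, ?_, ?_, ?_, ?_, ?_⟩
  · intro x x' y z u
    simp only [psi, inner_add_left, hQa1]; ring
  · intro c x y z u
    simp only [psi, real_inner_smul_left, hQs1]; ring
  · intro x y z u
    simp only [psi]
    linear_combination (-2 * Q z (J u)) * hg x y + (-2 * ⟪z, J u⟫_ℝ) * hQhyb x y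
  · intro x y z u
    simp only [psi]
    linear_combination (-2 * ⟪x, J y⟫_ℝ) * hQhyb u z + (-2 * Q x (J y)) * hg u z
  · intro x y z u
    simp only [psi]
    linear_combination (-Q z (J y)) * hg x u + ⟪x, J u⟫_ℝ * hQhyb y z
      + Q u (J y) * hg x z + (-⟪x, J z⟫_ℝ) * hQhyb y u
      + (-Q u (J x)) * hg y z + ⟪y, J z⟫_ℝ * hQhyb x u
      + Q z (J x) * hg y u + (-⟪y, J u⟫_ℝ) * hQhyb x z
  · intro x y z u
    simp only [psi]
    linear_combination (-⟪y, J u⟫_ℝ) * hQhyb z x + (-⟪z, J u⟫_ℝ) * hQhyb x y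
      + (-⟪x, J u⟫_ℝ) * hQhyb y z + (-Q y (J u)) * hg z x
      + (-Q z (J u)) * hg x y + (-Q x (J u)) * hg y z

theorem IsACT.sum1 {R : V → V → V → V → ℝ} (h : IsACT R) {ι : Type*} (s : Finset ι)
    (f : ι → V) (y z u : V) : R (∑ i ∈ s, f i) y z u = ∑ i ∈ s, R (f i) y z u := by
  classical
  induction s using Finset.induction_on with
  | empty => simpa using h.zero1 y z u
  | insert _ _ hx ih =>
      rw [Finset.sum_insert hx, h.add1, ih, Finset.sum_insert hx]

theorem IsACT.sum2 {R : V → V → V → V → ℝ} (h : IsACT R) {ι : Type*} (s : Finset ι)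
    (f : ι → V) (x z u : V) : R x (∑ i ∈ s, f i) z u = ∑ i ∈ s, R x (f i) z u := by
  rw [h.swap12, h.sum1, ← Finset.sum_neg_distrib]
  exact Finset.sum_congr rfl fun i _ => (h.swap12 x (f i) z u).symm

theorem IsACT.sum4 {R : V → V → V → V → ℝ} (h : IsACT R) {ι : Type*} (s : Finset ι)
    (f : ι → V) (x y z : V) : R x y z (∑ i ∈ s, f i) = ∑ i ∈ s, R x y z (f i) := by
  rw [h.pair, h.sum2]
  exact Finset.sum_congr rfl fun i _ => (h.pair x y z (f i)).symm

theorem trace_inv {R : V → V → V → V → ℝ} (h : IsACT R) {ι ι' : Type*}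
    [Fintype ι] [Fintype ι'] (b : OrthonormalBasis ι ℝ V) (b' : OrthonormalBasis ι' ℝ V)
    (y z : V) : ∑ i, R (b' i) y z (b' i) = ∑ i, R (b i) y z (b i) := by
  classical
  have expand : ∀ v : V, R v y z v
      = ∑ j, ∑ k, (⟪b j, v⟫_ℝ * ⟪b k, v⟫_ℝ) * R (b j) y z (b k) := by
    intro v
    conv_lhs => rw [← b.sum_repr' v, h.sum1]
    refine Finset.sum_congr rfl fun j _ => ?_
    rw [h.smul1, h.sum4]
    rw [Finset.mul_sum]
    refine Finset.sum_congr rfl fun k _ => ?_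
    rw [h.smul4]; ring
  rw [show (∑ i, R (b' i) y z (b' i))
      = ∑ i, ∑ j, ∑ k, (⟪b j, b' i⟫_ℝ * ⟪b k, b' i⟫_ℝ) * R (b j) y z (b k) from
    Finset.sum_congr rfl fun i _ => expand (b' i)]
  rw [Finset.sum_comm]
  refine Finset.sum_congr rfl fun j _ => ?_
  rw [Finset.sum_comm]
  have step : ∀ k : ι, (∑ i, (⟪b j, b' i⟫_ℝ * ⟪b k, b' i⟫_ℝ) * R (b j) y z (b k))
      = ⟪b j, b k⟫_ℝ * R (b j) y z (b k) := by
    intro k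
    rw [← Finset.sum_mul]
    congr 1
    rw [show (∑ i, ⟪b j, b' i⟫_ℝ * ⟪b k, b' i⟫_ℝ)
        = ∑ i, ⟪b j, b' i⟫_ℝ * ⟪b' i, b k⟫_ℝ from
      Finset.sum_congr rfl fun i _ => by rw [real_inner_comm (b k)]]
    exact b'.sum_inner_mul_inner _ _
  rw [Finset.sum_congr rfl fun k _ => step k]
  rw [Finset.sum_eq_single j]
  · rw [real_inner_self_eq_norm_mul_norm, b.orthonormal.1 j]; ring
  · intro k _ hk
    rw [b.orthonormal.2 (Ne.symm hk)]; ring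
  · intro hj; exact absurd (Finset.mem_univ j) hj

section Aux

variable {R : V → V → V → V → ℝ} {J : V →ₗ[ℝ] V} {ν : ℝ}

theorem inner_J_skew (hJ2 : ∀ x : V, J (J x) = -x)
    (hJiso : ∀ x y : V, ⟪J x, J y⟫_ℝ = ⟪x, y⟫_ℝ) (a c : V) :
    ⟪c, J a⟫_ℝ = -⟪a, J c⟫_ℝ := by
  calc ⟪c, J a⟫_ℝ = ⟪J c, J (J a)⟫_ℝ := (hJiso c (J a)).symm
    _ = ⟪J c, -a⟫_ℝ := by rw [hJ2 a]
    _ = -⟪a, J c⟫_ℝ := by rw [inner_neg_right, real_inner_comm]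

theorem inner_J_self (hJ2 : ∀ x : V, J (J x) = -x)
    (hJiso : ∀ x y : V, ⟪J x, J y⟫_ℝ = ⟪x, y⟫_ℝ) (a : V) : ⟪a, J a⟫_ℝ = 0 := by
  have := inner_J_skew hJ2 hJiso a a; linarith

theorem norm_J (hJiso : ∀ x y : V, ⟪J x, J y⟫_ℝ = ⟪x, y⟫_ℝ) (a : V) : ‖J a‖ = ‖a‖ := by
  rw [@norm_eq_sqrt_real_inner, hJiso, ← @norm_eq_sqrt_real_inner]

theorem nu_scaled (hR : IsACT R)
    (hν : ∀ x y : V, ‖x‖ = 1 → ‖y‖ = 1 → ⟪x, y⟫_ℝ = 0 → ⟪x, J y⟫_ℝ = 0 → R x y y x = ν)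
    (a y : V) (h1 : ⟪a, y⟫_ℝ = 0) (h2 : ⟪a, J y⟫_ℝ = 0) :
    R a y y a = ν * (⟪a, a⟫_ℝ * ⟪y, y⟫_ℝ) := by
  rcases eq_or_ne a 0 with rfl | ha
  · simp [hR.zero1]
  rcases eq_or_ne y 0 with rfl | hy
  · simp [hR.zero2]
  have ha' : ‖a‖ ≠ 0 := norm_ne_zero_iff.mpr ha
  have hy' : ‖y‖ ≠ 0 := norm_ne_zero_iff.mpr hy
  have e := hν (‖a‖⁻¹ • a) (‖y‖⁻¹ • y) (norm_smul_inv_norm ha) (norm_smul_inv_norm hy)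
    (by rw [real_inner_smul_left, real_inner_smul_right, h1]; ring)
    (by rw [map_smul, real_inner_smul_left, real_inner_smul_right, h2]; ring)
  rw [hR.smul1, hR.smul2, hR.smul3, hR.smul4] at e
  have hA : ⟪a, a⟫_ℝ = ‖a‖ * ‖a‖ := real_inner_self_eq_norm_mul_norm a
  have hY : ⟪y, y⟫_ℝ = ‖y‖ * ‖y‖ := real_inner_self_eq_norm_mul_norm y
  field_simp at e
  rw [hA, hY]
  linear_combination e

theorem nu_polar (hR : IsACT R)
    (hnu2 : ∀ a y : V, ⟪a, y⟫_ℝ = 0 → ⟪a, J y⟫_ℝ = 0 →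
      R a y y a = ν * (⟪a, a⟫_ℝ * ⟪y, y⟫_ℝ))
    (v p q : V) (hp1 : ⟪v, p⟫_ℝ = 0) (hp2 : ⟪v, J p⟫_ℝ = 0)
    (hq1 : ⟪v, q⟫_ℝ = 0) (hq2 : ⟪v, J q⟫_ℝ = 0) :
    R v p q v + R v q p v = 2 * ν * ⟪v, v⟫_ℝ * ⟪p, q⟫_ℝ := by
  have e := hnu2 v (p + q) (by rw [inner_add_right, hp1, hq1]; ring)
    (by rw [map_add, inner_add_right, hp2, hq2]; ring)
  simp only [hR.add2, hR.add3] at e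
  rw [inner_add_left, inner_add_right, inner_add_right] at e
  have e1 := hnu2 v p hp1 hp2
  have e2 := hnu2 v q hq1 hq2
  have hc : ⟪q, p⟫_ℝ = ⟪p, q⟫_ℝ := real_inner_comm p q
  linear_combination e - e1 - e2 + ν * ⟪v, v⟫_ℝ * hc

theorem nu_diag (hR : IsACT R)
    (hnu2 : ∀ a y : V, ⟪a, y⟫_ℝ = 0 → ⟪a, J y⟫_ℝ = 0 →
      R a y y a = ν * (⟪a, a⟫_ℝ * ⟪y, y⟫_ℝ))
    (v p q : V) (hp1 : ⟪v, p⟫_ℝ = 0) (hp2 : ⟪v, J p⟫_ℝ = 0)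
    (hq1 : ⟪v, q⟫_ℝ = 0) (hq2 : ⟪v, J q⟫_ℝ = 0) :
    R v p q v = ν * ⟪v, v⟫_ℝ * ⟪p, q⟫_ℝ := by
  have := nu_polar hR hnu2 v p q hp1 hp2 hq1 hq2
  have := hR.sect_symm v p q
  linarith

end Aux

section Adapted

variable {R : V → V → V → V → ℝ} {J : V →ₗ[ℝ] V} {ν : ℝ}

theorem sum_adapted2 {m : ℕ} (hm : 3 ≤ m) (b : OrthonormalBasis (Fin (2 * m)) ℝ V)
    (hR : IsACT R) (hJ2 : ∀ x : V, J (J x) = -x)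
    (hJiso : ∀ x y : V, ⟪J x, J y⟫_ℝ = ⟪x, y⟫_ℝ)
    (hnu2 : ∀ a y : V, ⟪a, y⟫_ℝ = 0 → ⟪a, J y⟫_ℝ = 0 →
      R a y y a = ν * (⟪a, a⟫_ℝ * ⟪y, y⟫_ℝ))
    (x : V) (hx : ‖x‖ = 1) :
    ∑ i, R (b i) x x (b i) = R x (J x) (J x) x + (2 * (m : ℝ) - 2) * ν := by
  classical
  haveI : FiniteDimensional ℝ V := Module.Finite.of_basis b.toBasis
  have hcard : Module.finrank ℝ V = Fintype.card (Fin (2 * m)) :=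
    Module.finrank_eq_card_basis b.toBasis
  have hi0 : (0 : ℕ) < 2 * m := by omega
  have hi1 : (1 : ℕ) < 2 * m := by omega
  set i0 : Fin (2 * m) := ⟨0, hi0⟩
  set i1 : Fin (2 * m) := ⟨1, hi1⟩
  have h01 : i0 ≠ i1 := by simp [i0, i1, Fin.ext_iff]
  obtain ⟨v, hv0, hv1⟩ : ∃ v : Fin (2 * m) → V, v i0 = x ∧ v i1 = J x :=
    ⟨fun i => if i = i0 then x else J x, by simp, by simp [h01.symm]⟩
  have hxx : ⟪x, x⟫_ℝ = 1 := by rw [real_inner_self_eq_norm_mul_norm, hx]; ring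
  have hJxJx : ⟪J x, J x⟫_ℝ = 1 := by rw [hJiso]; exact hxx
  have hxJx : ⟪x, J x⟫_ℝ = 0 := inner_J_self hJ2 hJiso x
  have hJxx : ⟪J x, x⟫_ℝ = 0 := by rw [real_inner_comm]; exact hxJx
  have horth : Orthonormal ℝ (({i0, i1} : Set (Fin (2 * m))).restrict v) := by
    rw [orthonormal_iff_ite]
    rintro ⟨i, hi⟩ ⟨j, hj⟩
    by_cases hij : i = j
    · subst hij
      rw [if_pos rfl]
      show ⟪v i, v i⟫_ℝ = 1
      simp only [Set.mem_insert_iff, Set.mem_singleton_iff] at hi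
      rcases hi with rfl | rfl
      · rw [hv0]; exact hxx
      · rw [hv1]; exact hJxJx
    · rw [if_neg (fun h => hij (congrArg Subtype.val h))]
      show ⟪v i, v j⟫_ℝ = 0
      simp only [Set.mem_insert_iff, Set.mem_singleton_iff] at hi hj
      rcases hi with rfl | rfl <;> rcases hj with rfl | rfl
      · exact absurd rfl hij
      · rw [hv0, hv1]; exact hxJx
      · rw [hv1, hv0]; exact hJxx
      · exact absurd rfl hij
  obtain ⟨c, hc⟩ :=
    Orthonormal.exists_orthonormalBasis_extension_of_card_eq hcard horth
  have hc0 : c i0 = x := by have := hc i0 (by simp); rwa [hv0] at this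
  have hc1 : c i1 = J x := by have := hc i1 (by simp); rwa [hv1] at this
  rw [← trace_inv hR b c x x]
  have hsub : ({i0, i1} : Finset (Fin (2 * m))) ⊆ Finset.univ := Finset.subset_univ _
  rw [← Finset.sum_sdiff hsub]
  have hrest : ∀ i ∈ Finset.univ \ ({i0, i1} : Finset _),
      R (c i) x x (c i) = ν := by
    intro i hi
    simp only [Finset.mem_sdiff, Finset.mem_insert, Finset.mem_singleton] at hi
    have hne0 : i ≠ i0 := fun h => hi.2 (Or.inl h)
    have hne1 : i ≠ i1 := fun h => hi.2 (Or.inr h)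
    have h1 : ⟪c i, x⟫_ℝ = 0 := by rw [← hc0]; exact c.orthonormal.2 hne0
    have h2 : ⟪c i, J x⟫_ℝ = 0 := by rw [← hc1]; exact c.orthonormal.2 hne1
    have hcc : ⟪c i, c i⟫_ℝ = 1 := by
      rw [real_inner_self_eq_norm_mul_norm, c.orthonormal.1 i]; ring
    rw [hnu2 (c i) x h1 h2, hcc, hxx]; ring
  rw [Finset.sum_congr rfl hrest, Finset.sum_const, Finset.sum_pair h01, hc0, hc1]
  rw [hR.diag12]
  have hpp : R (J x) x x (J x) = R x (J x) (J x) x := hR.pair _ _ _ _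
  rw [hpp]
  have hcards : (Finset.univ \ ({i0, i1} : Finset (Fin (2 * m)))).card = 2 * m - 2 := by
    rw [Finset.card_sdiff_of_subset hsub, Finset.card_univ, Fintype.card_fin, Finset.card_pair h01]
  rw [hcards, nsmul_eq_mul, Nat.cast_sub (by omega)]
  push_cast
  ring

theorem sum_adapted4 {m : ℕ} (hm : 3 ≤ m) (b : OrthonormalBasis (Fin (2 * m)) ℝ V)
    (hR : IsACT R) (hJ2 : ∀ x : V, J (J x) = -x)
    (hJiso : ∀ x y : V, ⟪J x, J y⟫_ℝ = ⟪x, y⟫_ℝ)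
    (hnu2 : ∀ a y : V, ⟪a, y⟫_ℝ = 0 → ⟪a, J y⟫_ℝ = 0 →
      R a y y a = ν * (⟪a, a⟫_ℝ * ⟪y, y⟫_ℝ))
    (x w : V) (hx : ‖x‖ = 1) (hw : ‖w‖ = 1) (hxw : ⟪x, w⟫_ℝ = 0)
    (hxJw : ⟪x, J w⟫_ℝ = 0) :
    ∑ i, R (b i) x (J w) (b i) = R (J x) x (J w) (J x) + R w x (J w) w := by
  classical
  haveI : FiniteDimensional ℝ V := Module.Finite.of_basis b.toBasis
  have hcard : Module.finrank ℝ V = Fintype.card (Fin (2 * m)) :=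
    Module.finrank_eq_card_basis b.toBasis
  have hi0 : (0 : ℕ) < 2 * m := by omega
  have hi1 : (1 : ℕ) < 2 * m := by omega
  have hi2 : (2 : ℕ) < 2 * m := by omega
  have hi3 : (3 : ℕ) < 2 * m := by omega
  set i0 : Fin (2 * m) := ⟨0, hi0⟩
  set i1 : Fin (2 * m) := ⟨1, hi1⟩
  set i2 : Fin (2 * m) := ⟨2, hi2⟩
  set i3 : Fin (2 * m) := ⟨3, hi3⟩
  have h01 : i0 ≠ i1 := by simp [i0, i1, Fin.ext_iff]
  have h02 : i0 ≠ i2 := by simp [i0, i2, Fin.ext_iff]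
  have h03 : i0 ≠ i3 := by simp [i0, i3, Fin.ext_iff]
  have h12 : i1 ≠ i2 := by simp [i1, i2, Fin.ext_iff]
  have h13 : i1 ≠ i3 := by simp [i1, i3, Fin.ext_iff]
  have h23 : i2 ≠ i3 := by simp [i2, i3, Fin.ext_iff]
  obtain ⟨v, hv0, hv1, hv2, hv3⟩ :
      ∃ v : Fin (2 * m) → V, v i0 = x ∧ v i1 = J x ∧ v i2 = w ∧ v i3 = J w :=
    ⟨fun i => if i = i0 then x else if i = i1 then J x else if i = i2 then w else J w,
      by simp, by simp [h01.symm], by simp [h02.symm, h12.symm],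
      by simp [h03.symm, h13.symm, h23.symm]⟩
  have hgsk : ∀ a c : V, ⟪c, J a⟫_ℝ = -⟪a, J c⟫_ℝ := inner_J_skew hJ2 hJiso
  have hxx : ⟪x, x⟫_ℝ = 1 := by rw [real_inner_self_eq_norm_mul_norm, hx]; ring
  have hww : ⟪w, w⟫_ℝ = 1 := by rw [real_inner_self_eq_norm_mul_norm, hw]; ring
  have hJxJx : ⟪J x, J x⟫_ℝ = 1 := by rw [hJiso]; exact hxx
  have hJwJw : ⟪J w, J w⟫_ℝ = 1 := by rw [hJiso]; exact hww
  have hxJx : ⟪x, J x⟫_ℝ = 0 := inner_J_self hJ2 hJiso x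
  have hwJw : ⟪w, J w⟫_ℝ = 0 := inner_J_self hJ2 hJiso w
  have hwJx : ⟪w, J x⟫_ℝ = 0 := by rw [hgsk, hxJw]; ring
  have hJxJw : ⟪J x, J w⟫_ℝ = 0 := by rw [hJiso]; exact hxw
  have hJxx : ⟪J x, x⟫_ℝ = 0 := by rw [real_inner_comm]; exact hxJx
  have hJww : ⟪J w, w⟫_ℝ = 0 := by rw [real_inner_comm]; exact hwJw
  have hwx : ⟪w, x⟫_ℝ = 0 := by rw [real_inner_comm]; exact hxw
  have hJwx : ⟪J w, x⟫_ℝ = 0 := by rw [real_inner_comm]; exact hxJw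
  have hJxw : ⟪J x, w⟫_ℝ = 0 := by rw [real_inner_comm]; exact hwJx
  have hJwJx : ⟪J w, J x⟫_ℝ = 0 := by rw [real_inner_comm]; exact hJxJw
  have horth : Orthonormal ℝ (({i0, i1, i2, i3} : Set (Fin (2 * m))).restrict v) := by
    rw [orthonormal_iff_ite]
    rintro ⟨i, hi⟩ ⟨j, hj⟩
    by_cases hij : i = j
    · subst hij
      rw [if_pos rfl]
      show ⟪v i, v i⟫_ℝ = 1
      simp only [Set.mem_insert_iff, Set.mem_singleton_iff] at hi
      rcases hi with rfl | rfl | rfl | rfl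
      · rw [hv0]; exact hxx
      · rw [hv1]; exact hJxJx
      · rw [hv2]; exact hww
      · rw [hv3]; exact hJwJw
    · rw [if_neg (fun h => hij (congrArg Subtype.val h))]
      show ⟪v i, v j⟫_ℝ = 0
      simp only [Set.mem_insert_iff, Set.mem_singleton_iff] at hi hj
      rcases hi with rfl | rfl | rfl | rfl <;> rcases hj with rfl | rfl | rfl | rfl
      · exact absurd rfl hij
      · rw [hv0, hv1]; exact hxJx
      · rw [hv0, hv2]; exact hxw
      · rw [hv0, hv3]; exact hxJw
      · rw [hv1, hv0]; exact hJxx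
      · exact absurd rfl hij
      · rw [hv1, hv2]; exact hJxw
      · rw [hv1, hv3]; exact hJxJw
      · rw [hv2, hv0]; exact hwx
      · rw [hv2, hv1]; exact hwJx
      · exact absurd rfl hij
      · rw [hv2, hv3]; exact hwJw
      · rw [hv3, hv0]; exact hJwx
      · rw [hv3, hv1]; exact hJwJx
      · rw [hv3, hv2]; exact hJww
      · exact absurd rfl hij
  obtain ⟨c, hc⟩ :=
    Orthonormal.exists_orthonormalBasis_extension_of_card_eq hcard horth
  have hc0 : c i0 = x := by have := hc i0 (by simp); rwa [hv0] at this
  have hc1 : c i1 = J x := by have := hc i1 (by simp); rwa [hv1] at this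
  have hc2 : c i2 = w := by have := hc i2 (by simp); rwa [hv2] at this
  have hc3 : c i3 = J w := by have := hc i3 (by simp); rwa [hv3] at this
  rw [← trace_inv hR b c x (J w)]
  have hsub : ({i0, i1, i2, i3} : Finset (Fin (2 * m))) ⊆ Finset.univ :=
    Finset.subset_univ _
  rw [← Finset.sum_sdiff hsub]
  have hrest : ∀ i ∈ Finset.univ \ ({i0, i1, i2, i3} : Finset _),
      R (c i) x (J w) (c i) = 0 := by
    intro i hi
    simp only [Finset.mem_sdiff, Finset.mem_insert, Finset.mem_singleton] at hi
    have hne0 : i ≠ i0 := fun h => hi.2 (Or.inl h)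
    have hne1 : i ≠ i1 := fun h => hi.2 (Or.inr (Or.inl h))
    have hne2 : i ≠ i2 := fun h => hi.2 (Or.inr (Or.inr (Or.inl h)))
    have hne3 : i ≠ i3 := fun h => hi.2 (Or.inr (Or.inr (Or.inr h)))
    have h1 : ⟪c i, x⟫_ℝ = 0 := by rw [← hc0]; exact c.orthonormal.2 hne0
    have h2 : ⟪c i, J x⟫_ℝ = 0 := by rw [← hc1]; exact c.orthonormal.2 hne1
    have h3 : ⟪c i, J w⟫_ℝ = 0 := by rw [← hc3]; exact c.orthonormal.2 hne3
    have h4 : ⟪c i, J (J w)⟫_ℝ = 0 := by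
      rw [hJ2, inner_neg_right, ← hc2, c.orthonormal.2 hne2]; ring
    rw [nu_diag hR hnu2 (c i) x (J w) h1 h2 h3 h4, hxJw]; ring
  rw [Finset.sum_congr rfl hrest, Finset.sum_const, smul_zero]
  have hA : ∑ i ∈ ({i0, i1, i2, i3} : Finset _), R (c i) x (J w) (c i)
      = R x x (J w) x + R (J x) x (J w) (J x) + R w x (J w) w
        + R (J w) x (J w) (J w) := by
    rw [show ({i0, i1, i2, i3} : Finset (Fin (2 * m)))
        = insert i0 (insert i1 (insert i2 {i3})) from rfl]
    rw [Finset.sum_insert (by simp [h01, h02, h03]),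
      Finset.sum_insert (by simp [h12, h13]),
      Finset.sum_insert (by simp [h23]), Finset.sum_singleton, hc0, hc1, hc2, hc3]
    ring
  rw [hA, hR.diag12, hR.diag34]
  ring

end Adapted

section Key

variable {R : V → V → V → V → ℝ} {J : V →ₗ[ℝ] V} {ν : ℝ}

theorem quartic_key (hR : IsACT R) (hJ2 : ∀ x : V, J (J x) = -x)
    (hJiso : ∀ x y : V, ⟪J x, J y⟫_ℝ = ⟪x, y⟫_ℝ)
    (hnu2 : ∀ a y : V, ⟪a, y⟫_ℝ = 0 → ⟪a, J y⟫_ℝ = 0 →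
      R a y y a = ν * (⟪a, a⟫_ℝ * ⟪y, y⟫_ℝ))
    (x w : V) (hx : ‖x‖ = 1) (hw : ‖w‖ = 1) (hxw : ⟪x, w⟫_ℝ = 0)
    (hxJw : ⟪x, J w⟫_ℝ = 0) :
    R x (J x) (J x) w = R w (J x) (J w) w := by
  have hgsk : ∀ a c : V, ⟪c, J a⟫_ℝ = -⟪a, J c⟫_ℝ := inner_J_skew hJ2 hJiso
  have hxx : ⟪x, x⟫_ℝ = 1 := by rw [real_inner_self_eq_norm_mul_norm, hx]; ring
  have hww : ⟪w, w⟫_ℝ = 1 := by rw [real_inner_self_eq_norm_mul_norm, hw]; ring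
  have hJxJx : ⟪J x, J x⟫_ℝ = 1 := by rw [hJiso]; exact hxx
  have hJwJw : ⟪J w, J w⟫_ℝ = 1 := by rw [hJiso]; exact hww
  have hxJx : ⟪x, J x⟫_ℝ = 0 := inner_J_self hJ2 hJiso x
  have hwJw : ⟪w, J w⟫_ℝ = 0 := inner_J_self hJ2 hJiso w
  have hwJx : ⟪w, J x⟫_ℝ = 0 := by rw [hgsk, hxJw]; ring
  have hJxJw : ⟪J x, J w⟫_ℝ = 0 := by rw [hJiso]; exact hxw
  have hwx : ⟪w, x⟫_ℝ = 0 := by rw [real_inner_comm]; exact hxw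
  have hJwJx : ⟪J w, J x⟫_ℝ = 0 := by rw [real_inner_comm]; exact hJxJw
  have hgen : ∀ α β : ℝ,
      R (α • x + β • w) (α • (J w) + (-β) • (J x)) (α • (J w) + (-β) • (J x))
        (α • x + β • w) = ν * ((α ^ 2 + β ^ 2) * (α ^ 2 + β ^ 2)) := by
    intro α β
    have h1 : ⟪α • x + β • w, α • (J w) + (-β) • (J x)⟫_ℝ = 0 := by
      simp [inner_add_left, inner_add_right, real_inner_smul_left,
        real_inner_smul_right, hxJw, hxJx, hwJw, hwJx]
    have h2 : ⟪α • x + β • w, J (α • (J w) + (-β) • (J x))⟫_ℝ = 0 := by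
      rw [map_add, map_smul, map_smul, hJ2, hJ2]
      simp only [inner_add_left, inner_add_right, real_inner_smul_left,
        real_inner_smul_right, inner_neg_right, smul_neg]
      rw [hxw, hwx, hxx, hww]
      ring
    have ha : ⟪α • x + β • w, α • x + β • w⟫_ℝ = α ^ 2 + β ^ 2 := by
      simp only [inner_add_left, inner_add_right, real_inner_smul_left,
        real_inner_smul_right]
      rw [hxx, hww, hxw, hwx]; ring
    have hy : ⟪α • (J w) + (-β) • (J x), α • (J w) + (-β) • (J x)⟫_ℝ
        = α ^ 2 + β ^ 2 := by
      simp only [inner_add_left, inner_add_right, real_inner_smul_left,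
        real_inner_smul_right]
      rw [hJwJw, hJxJx, hJxJw, hJwJx]; ring
    have e := hnu2 _ _ h1 h2
    rw [ha, hy] at e
    linear_combination e
  have hgen2 : ∀ α β : ℝ,
      (α * α * α * α) * R x (J w) (J w) x
      + (α * α * α * β) * (R x (J w) (J w) w + R w (J w) (J w) x)
      + (-(α * α * α * β)) * (R x (J w) (J x) x + R x (J x) (J w) x)
      + (α * α * β * β) * (R w (J w) (J w) w + R x (J x) (J x) x)
      + (-(α * α * β * β)) * (R x (J w) (J x) w + R x (J x) (J w) w
          + R w (J w) (J x) x + R w (J x) (J w) x)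
      + (-(α * β * β * β)) * (R w (J w) (J x) w + R w (J x) (J w) w)
      + (α * β * β * β) * (R x (J x) (J x) w + R w (J x) (J x) x)
      + (β * β * β * β) * R w (J x) (J x) w
      = ν * ((α ^ 2 + β ^ 2) * (α ^ 2 + β ^ 2)) := by
    intro α β
    have e := hgen α β
    simp only [hR.add1, hR.add2, hR.add3, hR.add4, hR.smul1, hR.smul2,
      hR.smul3, hR.smul4] at e
    linear_combination e
  have e11 := hgen2 1 1
  have e1m1 := hgen2 1 (-1)
  have e21 := hgen2 2 1
  have e2m1 := hgen2 2 (-1)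
  norm_num at e11 e1m1 e21 e2m1
  have s1 : R w (J x) (J x) x = R x (J x) (J x) w := hR.cross x (J x) (J x) w
  have s2 : R w (J w) (J x) w = R w (J x) (J w) w := hR.sect_symm w (J w) (J x)
  linarith [e11, e1m1, e21, e2m1, s1, s2]

theorem m_skew (hR : IsACT R) (hJ2 : ∀ x : V, J (J x) = -x)
    (hJiso : ∀ x y : V, ⟪J x, J y⟫_ℝ = ⟪x, y⟫_ℝ)
    (hnu2 : ∀ a y : V, ⟪a, y⟫_ℝ = 0 → ⟪a, J y⟫_ℝ = 0 →
      R a y y a = ν * (⟪a, a⟫_ℝ * ⟪y, y⟫_ℝ))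
    (x w : V) (hx : ‖x‖ = 1) (hw : ‖w‖ = 1) (hxw : ⟪x, w⟫_ℝ = 0)
    (hxJw : ⟪x, J w⟫_ℝ = 0) :
    R x w (J x) x = -R w x (J w) w := by
  have hgsk : ∀ a c : V, ⟪c, J a⟫_ℝ = -⟪a, J c⟫_ℝ := inner_J_skew hJ2 hJiso
  have hJx1 : ‖J x‖ = 1 := by rw [norm_J hJiso]; exact hx
  have hJxw : ⟪J x, w⟫_ℝ = 0 := by
    rw [real_inner_comm, hgsk, hxJw]; ring
  have hJxJw : ⟪J x, J w⟫_ℝ = 0 := by rw [hJiso]; exact hxw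
  have hkey := quartic_key hR hJ2 hJiso hnu2 (J x) w hJx1 hw hJxw hJxJw
  rw [hJ2] at hkey
  rw [hR.neg2, hR.neg3, hR.neg2] at hkey
  have hp : R (J x) x x w = R x w (J x) x := hR.pair _ _ _ _
  linarith

theorem eqB_val {m : ℕ} (hm : 3 ≤ m) (b : OrthonormalBasis (Fin (2 * m)) ℝ V)
    (hR : IsACT R) (h3 : Id3 J R) (hJ2 : ∀ x : V, J (J x) = -x)
    (hJiso : ∀ x y : V, ⟪J x, J y⟫_ℝ = ⟪x, y⟫_ℝ)
    (hnu2 : ∀ a y : V, ⟪a, y⟫_ℝ = 0 → ⟪a, J y⟫_ℝ = 0 →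
      R a y y a = ν * (⟪a, a⟫_ℝ * ⟪y, y⟫_ℝ))
    (x w : V) (hx : ‖x‖ = 1) (hw : ‖w‖ = 1) (hxw : ⟪x, w⟫_ℝ = 0)
    (hxJw : ⟪x, J w⟫_ℝ = 0) :
    R x w (J x) x = -(1 / 2) * ∑ i, R (b i) x (J w) (b i) := by
  have hS := sum_adapted4 hm b hR hJ2 hJiso hnu2 x w hx hw hxw hxJw
  have hq1 : R (J x) x (J w) (J x) = -R x w (J x) x := by
    have e := h3 (J x) x (J w) (J x)
    rw [hJ2, hJ2] at e
    rw [hR.neg1, hR.neg3, hR.neg4] at e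
    have hpp : R x (J x) w x = R x w (J x) x := hR.sect_symm x (J x) w
    linarith
  have hmk := m_skew hR hJ2 hJiso hnu2 x w hx hw hxw hxJw
  linarith
end Key

/-- The difference tensor in Statement 6. -/
noncomputable def Ecomb (J : V →ₗ[ℝ] V) (S : V → V → ℝ) (ν c : ℝ)
    (R : V → V → V → V → ℝ) : V → V → V → V → ℝ :=
  fun x y z u =>
    R x y z u - ((1 / 6) * psi J S x y z u + ν * pi1 x y z u - c * ν * pi2 J x y z u)

theorem stmt6' (m : ℕ) (hm : 3 ≤ m) (b : OrthonormalBasis (Fin (2 * m)) ℝ V)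
    (J : V →ₗ[ℝ] V) (hJ2 : ∀ x, J (J x) = -x)
    (hJiso : ∀ x y, ⟪J x, J y⟫_ℝ = ⟪x, y⟫_ℝ)
    (R : V → V → V → V → ℝ) (hR : IsACT R) (h3 : Id3 J R) (ν : ℝ)
    (hν : ∀ x y : V, ‖x‖ = 1 → ‖y‖ = 1 → ⟪x, y⟫_ℝ = 0 → ⟪x, J y⟫_ℝ = 0 →
      R x y y x = ν) :
    ∀ x y z u : V,
      R x y z u =
        (1 / 6) * psi J (fun a c => ∑ i, R (b i) a c (b i)) x y z u
          + ν * pi1 x y z u - ((2 * (m : ℝ) - 1) / 3) * ν * pi2 J x y z u := by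
  classical
  intro x y z u
  set S : V → V → ℝ := fun a c => ∑ i, R (b i) a c (b i) with hSdef
  have hgsk : ∀ a c : V, ⟪c, J a⟫_ℝ = -⟪a, J c⟫_ℝ := inner_J_skew hJ2 hJiso
  have hnu2 : ∀ a y' : V, ⟪a, y'⟫_ℝ = 0 → ⟪a, J y'⟫_ℝ = 0 →
      R a y' y' a = ν * (⟪a, a⟫_ℝ * ⟪y', y'⟫_ℝ) := nu_scaled hR hν
  -- properties of the Ricci form S
  have hSsymm : ∀ a c, S a c = S c a := fun a c =>
    Finset.sum_congr rfl fun i _ => hR.sect_symm (b i) a c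
  have hSa1 : ∀ a a' c, S (a + a') c = S a c + S a' c := by
    intro a a' c
    simp only [hSdef]
    rw [← Finset.sum_add_distrib]
    exact Finset.sum_congr rfl fun i _ => hR.add2 _ _ _ _ _
  have hSs1 : ∀ (t : ℝ) a c, S (t • a) c = t * S a c := by
    intro t a c
    simp only [hSdef]
    rw [Finset.mul_sum]
    exact Finset.sum_congr rfl fun i _ => hR.smul2 _ _ _ _ _
  have hSs2 : ∀ (t : ℝ) a c, S a (t • c) = t * S a c := by
    intro t a c
    simp only [hSdef]
    rw [Finset.mul_sum]
    exact Finset.sum_congr rfl fun i _ => hR.smul3 _ _ _ _ _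
  have hSneg2 : ∀ a c, S a (-c) = -S a c := by
    intro a c
    have := hSs2 (-1) a c
    simpa using this
  -- J-invariance of S
  have hSJ : ∀ a c, S (J a) (J c) = S a c := by
    intro a c
    let Jequiv : V ≃ₗ[ℝ] V := LinearEquiv.ofLinear J (-J)
      (by ext v; simp [LinearMap.comp_apply, hJ2])
      (by ext v; simp [LinearMap.comp_apply, hJ2])
    let Jiso : V ≃ₗᵢ[ℝ] V := ⟨Jequiv, fun v => norm_J hJiso v⟩
    have hJis : ∀ v, Jiso v = J v := fun v => rfl
    have tr := trace_inv hR b (b.map Jiso) a c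
    simp only [OrthonormalBasis.map_apply, hJis] at tr
    have step : ∀ i, R (b i) (J a) (J c) (b i) = R (J (b i)) a c (J (b i)) := by
      intro i
      have e := h3 (b i) (J a) (J c) (b i)
      rw [hJ2, hJ2] at e
      rw [hR.neg2, hR.neg3] at e
      simpa using e
    simp only [hSdef]
    rw [Finset.sum_congr rfl fun i _ => step i]
    exact tr
  have hShyb : ∀ a c, S c (J a) = -S a (J c) := by
    intro a c
    have h1 : S (J c) (J (J a)) = S c (J a) := hSJ c (J a)
    rw [hJ2, hSneg2] at h1
    rw [← h1, hSsymm (J c) a, hSsymm a (J c)]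
  -- the difference tensor is an ACT
  have hpsiACT : IsACT (psi J S) := isACT_psi J hgsk S hSa1 hSs1 hShyb
  have hinnerACT : IsACT (psi J (fun a c : V => ⟪a, c⟫_ℝ)) :=
    isACT_psi J hgsk _ (fun a a' c => by simp [inner_add_left])
      (fun t a c => by simp [real_inner_smul_left]) (fun a c => hgsk a c)
  have hpi2ACT : IsACT (fun (x' y' z' u' : V) => pi2 J x' y' z' u') :=
    hinnerACT.constMul (1 / 2)
  have hEACT : IsACT (Ecomb J S ν ((2 * (m : ℝ) - 1) / 3) R) :=
    hR.sub (((hpsiACT.constMul (1 / 6)).add (isACT_pi1.constMul ν)).sub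
      (hpi2ACT.constMul ((2 * (m : ℝ) - 1) / 3 * ν)))
  -- sectional values of the difference tensor vanish: special evaluations
  have eqA : ∀ p : V, ‖p‖ = 1 → Ecomb J S ν ((2 * (m : ℝ) - 1) / 3) R p (J p) (J p) p = 0 := by
    intro p hp
    have hp1 : ⟪p, p⟫_ℝ = 1 := by rw [real_inner_self_eq_norm_mul_norm, hp]; ring
    have hpJ : ⟪p, J p⟫_ℝ = 0 := inner_J_self hJ2 hJiso p
    have hJpp : ⟪J p, p⟫_ℝ = 0 := by rw [real_inner_comm]; exact hpJ
    have hJpJp : ⟪J p, J p⟫_ℝ = 1 := by rw [hJiso]; exact hp1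
    have hSA : S p p = R p (J p) (J p) p + (2 * (m : ℝ) - 2) * ν := by
      simp only [hSdef]
      exact sum_adapted2 hm b hR hJ2 hJiso hnu2 p hp
    have hpsiv : psi J S p (J p) (J p) p = 6 * S p p := by
      simp only [psi]
      rw [hJ2 p]
      simp only [inner_neg_right, hSneg2]
      rw [hpJ, hp1, hJpp, hJpJp, hSJ p p]
      ring
    have hpi1v : pi1 p (J p) (J p) p = 1 := by
      simp only [pi1]
      rw [hpJ, hp1, hJpp, hJpJp]
      ring
    have hpi2v : pi2 J p (J p) (J p) p = 3 := by
      simp only [pi2, psi]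
      rw [hJ2 p]
      simp only [inner_neg_right]
      rw [hpJ, hp1, hJpp, hJpJp]
      ring
    simp only [Ecomb]
    rw [hpsiv, hpi1v, hpi2v]
    linarith [hSA]
  have eqBu : ∀ p w : V, ‖p‖ = 1 → ‖w‖ = 1 → ⟪p, w⟫_ℝ = 0 → ⟪J p, w⟫_ℝ = 0 →
      Ecomb J S ν ((2 * (m : ℝ) - 1) / 3) R p w (J p) p = 0 := by
    intro p w hp hw hpw hJpw
    have hp1 : ⟪p, p⟫_ℝ = 1 := by rw [real_inner_self_eq_norm_mul_norm, hp]; ring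
    have hpJ : ⟪p, J p⟫_ℝ = 0 := inner_J_self hJ2 hJiso p
    have hJpp : ⟪J p, p⟫_ℝ = 0 := by rw [real_inner_comm]; exact hpJ
    have hJpJp : ⟪J p, J p⟫_ℝ = 1 := by rw [hJiso]; exact hp1
    have hpJw : ⟪p, J w⟫_ℝ = 0 := by
      rw [hgsk]
      rw [real_inner_comm] at hJpw
      rw [hJpw]; ring
    have hwp : ⟪w, p⟫_ℝ = 0 := by rw [real_inner_comm]; exact hpw
    have hwJp : ⟪w, J p⟫_ℝ = 0 := by rw [real_inner_comm]; exact hJpw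
    have hval : R p w (J p) p = -(1 / 2) * S p (J w) := by
      simp only [hSdef]
      exact eqB_val hm b hR h3 hJ2 hJiso hnu2 p w hp hw hpw hpJw
    have hpsiv : psi J S p w (J p) p = -3 * S p (J w) := by
      simp only [psi]
      rw [hJ2 p]
      simp only [inner_neg_right, hSneg2]
      rw [hpJ, hp1, hpJw, hwp, hwJp, hJpJp, hShyb p w]
      ring
    have hpi1v : pi1 p w (J p) p = 0 := by
      simp only [pi1]
      rw [hpJ, hwp, hwJp]
      ring
    have hpi2v : pi2 J p w (J p) p = 0 := by
      simp only [pi2, psi]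
      rw [hJ2 p]
      simp only [inner_neg_right]
      rw [hpJ, hpJw, hwp, hwJp]
      ring
    simp only [Ecomb]
    rw [hval, hpsiv, hpi1v, hpi2v]
    ring
  have eqB : ∀ p w : V, ‖p‖ = 1 → ⟪p, w⟫_ℝ = 0 → ⟪J p, w⟫_ℝ = 0 →
      Ecomb J S ν ((2 * (m : ℝ) - 1) / 3) R p w (J p) p = 0 := by
    intro p w hp hpw hJpw
    rcases eq_or_ne w 0 with rfl | hw0
    · exact hEACT.zero2 _ _ _
    · have hw' : ‖w‖ ≠ 0 := norm_ne_zero_iff.mpr hw0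
      have h1 : ‖(‖w‖⁻¹ • w)‖ = 1 := norm_smul_inv_norm hw0
      have h2 : ⟪p, ‖w‖⁻¹ • w⟫_ℝ = 0 := by
        rw [real_inner_smul_right, hpw]; ring
      have h3' : ⟪J p, ‖w‖⁻¹ • w⟫_ℝ = 0 := by
        rw [real_inner_smul_right, hJpw]; ring
      have key := eqBu p (‖w‖⁻¹ • w) hp h1 h2 h3'
      have hww : w = ‖w‖ • (‖w‖⁻¹ • w) := (smul_inv_smul₀ hw' w).symm
      calc Ecomb J S ν ((2 * (m : ℝ) - 1) / 3) R p w (J p) p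
          = Ecomb J S ν ((2 * (m : ℝ) - 1) / 3) R p (‖w‖ • (‖w‖⁻¹ • w)) (J p) p := by
            rw [← hww]
        _ = ‖w‖ * Ecomb J S ν ((2 * (m : ℝ) - 1) / 3) R p (‖w‖⁻¹ • w) (J p) p :=
            hEACT.smul2 _ _ _ _ _
        _ = 0 := by rw [key]; ring
  have eqSec : ∀ p w : V, ‖p‖ = 1 → ⟪p, w⟫_ℝ = 0 → ⟪J p, w⟫_ℝ = 0 →
      Ecomb J S ν ((2 * (m : ℝ) - 1) / 3) R p w w p = 0 := by
    intro p w hp hpw hJpw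
    have hp1 : ⟪p, p⟫_ℝ = 1 := by rw [real_inner_self_eq_norm_mul_norm, hp]; ring
    have hpJ : ⟪p, J p⟫_ℝ = 0 := inner_J_self hJ2 hJiso p
    have hwJw : ⟪w, J w⟫_ℝ = 0 := inner_J_self hJ2 hJiso w
    have hpJw : ⟪p, J w⟫_ℝ = 0 := by
      rw [hgsk]
      rw [real_inner_comm] at hJpw
      rw [hJpw]; ring
    have hwp : ⟪w, p⟫_ℝ = 0 := by rw [real_inner_comm]; exact hpw
    have hwJp : ⟪w, J p⟫_ℝ = 0 := by rw [real_inner_comm]; exact hJpw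
    have hval : R p w w p = ν * (⟪p, p⟫_ℝ * ⟪w, w⟫_ℝ) := hnu2 p w hpw hpJw
    have hpsiv : psi J S p w w p = 0 := by
      simp only [psi]
      rw [hpJ, hpJw, hwJw, hwJp]
      ring
    have hpi1v : pi1 p w w p = ⟪w, w⟫_ℝ := by
      simp only [pi1]
      rw [hp1, hpw, hwp]
      ring
    have hpi2v : pi2 J p w w p = 0 := by
      simp only [pi2, psi]
      rw [hpJ, hpJw, hwJw, hwJp]
      ring
    simp only [Ecomb]
    rw [hval, hpsiv, hpi1v, hpi2v, hp1]
    ring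
  -- all sectional values vanish
  have hsectU : ∀ p : V, ‖p‖ = 1 → ∀ q : V,
      Ecomb J S ν ((2 * (m : ℝ) - 1) / 3) R p q q p = 0 := by
    intro p hp q
    have hp1 : ⟪p, p⟫_ℝ = 1 := by rw [real_inner_self_eq_norm_mul_norm, hp]; ring
    have hpJ : ⟪p, J p⟫_ℝ = 0 := inner_J_self hJ2 hJiso p
    have hJpp : ⟪J p, p⟫_ℝ = 0 := by rw [real_inner_comm]; exact hpJ
    have hJpJp : ⟪J p, J p⟫_ℝ = 1 := by rw [hJiso]; exact hp1
    obtain ⟨w, hwdef⟩ : ∃ w, w = q - ⟪p, q⟫_ℝ • p - ⟪J p, q⟫_ℝ • (J p) := ⟨_, rfl⟩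
    have hw1 : ⟪p, w⟫_ℝ = 0 := by
      rw [hwdef]
      simp only [inner_sub_right, real_inner_smul_right]
      rw [hp1, hpJ]; ring
    have hw2 : ⟪J p, w⟫_ℝ = 0 := by
      rw [hwdef]
      simp only [inner_sub_right, real_inner_smul_right]
      rw [hJpp, hJpJp]; ring
    have hq : q = ⟪p, q⟫_ℝ • p + (⟪J p, q⟫_ℝ • (J p) + w) := by
      rw [hwdef]; abel
    have hA := eqA p hp
    have hB := eqB p w hp hw1 hw2
    have hB' : Ecomb J S ν ((2 * (m : ℝ) - 1) / 3) R p (J p) w p = 0 := by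
      rw [hEACT.sect_symm p (J p) w]; exact hB
    have hC := eqSec p w hp hw1 hw2
    rw [hq]
    simp only [hEACT.add2, hEACT.add3, hEACT.smul2, hEACT.smul3, hEACT.diag12,
      hEACT.diag34, hA, hB, hB', hC, mul_zero, add_zero, zero_add]
  have hsect : ∀ p q : V, Ecomb J S ν ((2 * (m : ℝ) - 1) / 3) R p q q p = 0 := by
    intro p q
    rcases eq_or_ne p 0 with rfl | hp0
    · exact hEACT.zero1 _ _ _
    · have hp' : ‖p‖ ≠ 0 := norm_ne_zero_iff.mpr hp0
      have h1 : ‖(‖p‖⁻¹ • p)‖ = 1 := norm_smul_inv_norm hp0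
      have key := hsectU (‖p‖⁻¹ • p) h1 q
      have hpp : p = ‖p‖ • (‖p‖⁻¹ • p) := (smul_inv_smul₀ hp' p).symm
      calc Ecomb J S ν ((2 * (m : ℝ) - 1) / 3) R p q q p
          = Ecomb J S ν ((2 * (m : ℝ) - 1) / 3) R (‖p‖ • (‖p‖⁻¹ • p)) q q
              (‖p‖ • (‖p‖⁻¹ • p)) := by rw [← hpp]
        _ = ‖p‖ * (‖p‖ * Ecomb J S ν ((2 * (m : ℝ) - 1) / 3) R (‖p‖⁻¹ • p) q q
              (‖p‖⁻¹ • p)) := by rw [hEACT.smul1, hEACT.smul4]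
        _ = 0 := by rw [key]; ring
  have hzero := hEACT.zero_of_sect hsect x y z u
  simp only [Ecomb] at hzero
  linarith

/-- If an algebraic curvature tensor `R` on a `2m`-dimensional
space (`m ≥ 3`) satisfies identity 3 and has constant antiholomorphic
sectional curvature `ν`, then `R = (1/6)ψ(S) + ν π₁ − ((2m−1)/3) ν π₂`, where
`S` is the Ricci form of `R`. -/
theorem stmt6 (m : ℕ) (hm : 3 ≤ m) (b : OrthonormalBasis (Fin (2 * m)) ℝ V)
    (J : V →ₗ[ℝ] V) (hJ2 : ∀ x, J (J x) = -x)
    (hJiso : ∀ x y, ⟪J x, J y⟫_ℝ = ⟪x, y⟫_ℝ)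
    (R : V → V → V → V → ℝ) (hR : IsACT R) (h3 : Id3 J R) (ν : ℝ)
    (hν : ∀ x y : V, ‖x‖ = 1 → ‖y‖ = 1 → ⟪x, y⟫_ℝ = 0 → ⟪x, J y⟫_ℝ = 0 →
      R x y y x = ν) :
    ∀ x y z u : V,
      R x y z u =
        (1 / 6) * psi J (fun a c => ∑ i, R (b i) a c (b i)) x y z u
          + ν * pi1 x y z u - ((2 * (m : ℝ) - 1) / 3) * ν * pi2 J x y z u := by
  exact stmt6' m hm b J hJ2 hJiso R hR h3 ν hν
end
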